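/- arXiv:1810.03496 — 2 statements merged into one kernel-verified Lean document; each statement's English description precedes it below -/
import Mathlib

section
/- Let Q : [0,1] → ℝ have an absolutely continuous derivative q that is continuous on [0,1] with Q(p) = ∫_0^p q(x) dx. Define Q_n(p) = ∑_{k=0}^n (q(k/n)/(n+1)) * F_{k,n}(p), where F_{k,n}(p) = ∫_0^p (Γ(n+2)/(Γ(k+1)Γ(n-k+1))) x^k (1-x)^{n-k} dx is the Beta(k+1, n-k+1) cumulative distribution function. Then for every p ∈ [0,1], Q_n(p) → Q(p) as n → ∞. -/
open Finset Filter intervalIntegral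

open scoped unitInterval

lemma gamma_ratio_eq (n k : ℕ) (hk : k ≤ n) :
    Real.Gamma ((n:ℝ) + 2) / (Real.Gamma ((k:ℝ) + 1) * Real.Gamma ((n:ℝ) - (k:ℝ) + 1))
      = ((n:ℝ) + 1) * (n.choose k) := by
  have h1 : ((n:ℝ) + 2) = ((n+1 : ℕ) : ℝ) + 1 := by push_cast; ring
  have h2 : ((n:ℝ) - (k:ℝ) + 1) = ((n - k : ℕ) : ℝ) + 1 := by
    push_cast [hk]; ring
  rw [h1, h2, Real.Gamma_nat_eq_factorial, Real.Gamma_nat_eq_factorial,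
    Real.Gamma_nat_eq_factorial]
  have key : (((n+1).factorial : ℝ)) = (((n:ℝ)+1) * (n.choose k)) * ((k.factorial) * ((n-k).factorial)) := by
    rw [Nat.factorial_succ]
    push_cast [← Nat.choose_mul_factorial_mul_factorial hk]
    ring
  rw [key]
  have hk0 : ((k.factorial : ℝ) * ((n-k).factorial : ℝ)) ≠ 0 := by positivity
  field_simp

/-- Beta-CDF (Bernstein-type) expansions converge pointwise to the quantile
function `Q(p) = ∫_0^p q`. -/
theorem beta_cdf_expansion_tendsto (q Q : ℝ → ℝ)
    (hq : ContinuousOn q (Set.Icc 0 1))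
    (hQ : ∀ p ∈ Set.Icc (0:ℝ) 1, Q p = ∫ x in (0:ℝ)..p, q x)
    (F : ℕ → ℕ → ℝ → ℝ)
    (hF : ∀ k n, ∀ p ∈ Set.Icc (0:ℝ) 1,
      F k n p = ∫ x in (0:ℝ)..p,
        (Real.Gamma ((n:ℝ) + 2) / (Real.Gamma ((k:ℝ) + 1) * Real.Gamma ((n:ℝ) - (k:ℝ) + 1)))
          * x ^ k * (1 - x) ^ (n - k)) :
    ∀ p ∈ Set.Icc (0:ℝ) 1,
      Tendsto (fun (n : ℕ) =>
          ∑ k ∈ Finset.range (n + 1), (q ((k:ℝ) / n) / ((n:ℝ) + 1)) * F k n p)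
        atTop (nhds (Q p)) := by
  intro p hp
  obtain ⟨hp0, hp1⟩ := hp
  have huIcc : Set.uIcc (0:ℝ) p = Set.Icc 0 p := Set.uIcc_of_le hp0
  have hsub : Set.uIcc (0:ℝ) p ⊆ Set.Icc 0 1 := by
    rw [huIcc]; exact Set.Icc_subset_Icc le_rfl hp1
  set f : C(I, ℝ) := ⟨(Set.Icc (0:ℝ) 1).restrict q, hq.restrict⟩ with hf
  -- the Bernstein polynomial as a function on ℝ
  set g : ℕ → ℝ → ℝ := fun n x => ∑ k ∈ Finset.range (n + 1),
      (q ((k:ℝ) / n) / ((n:ℝ) + 1)) *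
        ((Real.Gamma ((n:ℝ) + 2) / (Real.Gamma ((k:ℝ) + 1) * Real.Gamma ((n:ℝ) - (k:ℝ) + 1)))
          * x ^ k * (1 - x) ^ (n - k)) with hg
  have hgcont : ∀ n, Continuous (g n) := by
    intro n
    apply continuous_finset_sum
    intro k _
    fun_prop
  -- step 1 : sum = integral of g
  have hstep1 : ∀ n : ℕ,
      ∑ k ∈ Finset.range (n + 1), (q ((k:ℝ) / n) / ((n:ℝ) + 1)) * F k n p
        = ∫ x in (0:ℝ)..p, g n x := by
    intro n
    rw [hg]
    rw [intervalIntegral.integral_finset_sum]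
    · apply Finset.sum_congr rfl
      intro k _
      rw [hF k n p ⟨hp0, hp1⟩, intervalIntegral.integral_const_mul]
    · intro k _
      exact (by fun_prop : Continuous fun x : ℝ =>
        (q ((k:ℝ) / n) / ((n:ℝ) + 1)) *
        ((Real.Gamma ((n:ℝ) + 2) / (Real.Gamma ((k:ℝ) + 1) * Real.Gamma ((n:ℝ) - (k:ℝ) + 1)))
          * x ^ k * (1 - x) ^ (n - k))).intervalIntegrable 0 p
  -- step 2 : g n x = bernsteinApproximation n f x on [0,1]
  have hstep2 : ∀ n : ℕ, ∀ x, ∀ hx : x ∈ Set.Icc (0:ℝ) 1,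
      g n x = bernsteinApproximation n f ⟨x, hx⟩ := by
    intro n x hx
    have h : bernsteinApproximation n f ⟨x, hx⟩
        = ∑ k : Fin (n+1), q ((k:ℝ)/n) *
            ((n.choose (k:ℕ) : ℝ) * x ^ (k:ℕ) * (1 - x) ^ (n - (k:ℕ))) := by
      simp [hf, bernsteinApproximation, bernstein.z, Set.restrict, bernstein_apply]
      exact Finset.sum_congr rfl fun _ _ => mul_comm _ _
    rw [h, Fin.sum_univ_eq_sum_range
      (fun k : ℕ => q ((k:ℝ)/n) * ((n.choose k : ℝ) * x ^ k * (1 - x) ^ (n - k))), hg]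
    apply Finset.sum_congr rfl
    intro k hk
    rw [gamma_ratio_eq n k (by simpa using Nat.lt_succ_iff.mp (Finset.mem_range.mp hk))]
    have hn1 : ((n:ℝ) + 1) ≠ 0 := by positivity
    field_simp
  -- step 3 : the bound
  have hnorm : Tendsto (fun n => ‖bernsteinApproximation n f - f‖) atTop (nhds 0) :=
    tendsto_iff_norm_sub_tendsto_zero.mp (bernsteinApproximation_uniform f)
  rw [hQ p ⟨hp0, hp1⟩]
  have hqint : IntervalIntegrable q MeasureTheory.volume 0 p :=
    (hq.mono hsub).intervalIntegrable
  rw [← tendsto_sub_nhds_zero_iff]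
  apply squeeze_zero_norm _ hnorm
  intro n
  rw [hstep1 n]
  have hgint : IntervalIntegrable (g n) MeasureTheory.volume 0 p :=
    (hgcont n).intervalIntegrable 0 p
  rw [← intervalIntegral.integral_sub hgint hqint]
  have hb : ∀ x ∈ Set.uIoc (0:ℝ) p, ‖g n x - q x‖ ≤ ‖bernsteinApproximation n f - f‖ := by
    intro x hx
    have hx1 : x ∈ Set.Icc (0:ℝ) 1 := hsub (Set.uIoc_subset_uIcc hx)
    have : g n x - q x = (bernsteinApproximation n f - f) ⟨x, hx1⟩ := by
      rw [hstep2 n x hx1]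
      simp [hf, Set.restrict]
    rw [this]
    exact (bernsteinApproximation n f - f).norm_coe_le_norm _
  calc ‖∫ x in (0:ℝ)..p, (g n x - q x)‖
      ≤ ‖bernsteinApproximation n f - f‖ * |p - 0| :=
        intervalIntegral.norm_integral_le_of_norm_le_const hb
    _ ≤ ‖bernsteinApproximation n f - f‖ := by
        rw [sub_zero, abs_of_nonneg hp0]
        nlinarith [norm_nonneg (bernsteinApproximation n f - f)]
end

section
/- Let F and G be cumulative distribution functions on ℝ with quantile functions F^{-1} and G^{-1}, and suppose ∫_0^1 |F^{-1}(p)|² dp and ∫_0^1 |G^{-1}(p)|² dp are finite. Let U be uniform on (0,1). Then the coupling (F^{-1}(U), G^{-1}(U)) attains the minimal L² distance among couplings in the sense that for any pair of random variables (X, Y) with X ~ F and Y ~ G defined on a common probability space, E[(X−Y)²] ≥ ∫_0^1 (F^{-1}(p) − G^{-1}(p))² dp. -/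
open MeasureTheory Filter Set

section QuantileCouplingAux

noncomputable def Kern (x y : ℝ) : ENNReal :=
  (volume.prod volume) {q : ℝ × ℝ | y ≤ q.1 ∧ q.1 < q.2 ∧ q.2 ≤ x}

lemma Kern_set_measurable (x y : ℝ) :
    MeasurableSet {q : ℝ × ℝ | y ≤ q.1 ∧ q.1 < q.2 ∧ q.2 ≤ x} := by
  apply (measurableSet_le measurable_const measurable_fst).inter
  exact (measurableSet_lt measurable_fst measurable_snd).inter
    (measurableSet_le measurable_snd measurable_const)

lemma Kern_of_le {x y : ℝ} (h : y ≤ x) :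
    Kern x y = ENNReal.ofReal ((x - y) ^ 2 / 2) := by
  have hslice : ∀ s : ℝ, volume (Prod.mk s ⁻¹' {q : ℝ × ℝ | y ≤ q.1 ∧ q.1 < q.2 ∧ q.2 ≤ x})
      = Set.indicator (Icc y x) (fun s => ENNReal.ofReal (x - s)) s := by
    intro s
    by_cases hs : y ≤ s
    · have : Prod.mk s ⁻¹' {q : ℝ × ℝ | y ≤ q.1 ∧ q.1 < q.2 ∧ q.2 ≤ x} = Ioc s x := by
        ext t; simp [hs, and_comm]
      rw [this, Real.volume_Ioc]
      by_cases hsx : s ≤ x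
      · rw [Set.indicator_of_mem (Set.mem_Icc.mpr ⟨hs, hsx⟩)]
      · rw [Set.indicator_of_notMem (fun hm => hsx hm.2), ENNReal.ofReal_eq_zero]
        linarith
    · have : Prod.mk s ⁻¹' {q : ℝ × ℝ | y ≤ q.1 ∧ q.1 < q.2 ∧ q.2 ≤ x} = ∅ := by
        ext t; simp [hs]
      rw [this, measure_empty, Set.indicator_of_notMem (fun hm => hs hm.1)]
  have h1 : Kern x y = ∫⁻ s in Icc y x, ENNReal.ofReal (x - s) := by
    rw [Kern, Measure.prod_apply (Kern_set_measurable x y)]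
    simp_rw [hslice]
    rw [lintegral_indicator measurableSet_Icc]
  rw [h1]
  have hint : IntegrableOn (fun s => x - s) (Icc y x) volume :=
    (continuous_const.sub continuous_id).integrableOn_Icc
  have hnn : 0 ≤ᶠ[ae (volume.restrict (Icc y x))] fun s => x - s := by
    rw [EventuallyLE, ae_restrict_iff' measurableSet_Icc]
    exact ae_of_all _ fun s hs => by simp; linarith [hs.2]
  rw [← ofReal_integral_eq_lintegral_ofReal hint hnn]
  congr 1
  rw [integral_Icc_eq_integral_Ioc, ← intervalIntegral.integral_of_le h]
  rw [intervalIntegral.integral_sub intervalIntegrable_const intervalIntegral.intervalIntegrable_id]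
  simp [integral_id]
  ring

lemma Kern_of_ge {x y : ℝ} (h : x ≤ y) : Kern x y = 0 := by
  have : {q : ℝ × ℝ | y ≤ q.1 ∧ q.1 < q.2 ∧ q.2 ≤ x} = ∅ := by
    ext q; simp only [Set.mem_setOf_eq, Set.mem_empty_iff_false, iff_false, not_and]
    intro h1 h2 h3; linarith
  rw [Kern, this, measure_empty]

lemma two_Kern (x y : ℝ) :
    2 * Kern x y + 2 * Kern y x = ENNReal.ofReal ((x - y) ^ 2) := by
  have h2 : (ENNReal.ofReal 2) = 2 := by norm_num
  have key : ∀ c : ℝ, 2 * ENNReal.ofReal (c / 2) = ENNReal.ofReal c := fun c => by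
    rw [← h2, ← ENNReal.ofReal_mul (by norm_num : (0:ℝ) ≤ 2)]
    congr 1; ring
  rcases le_total y x with h | h
  · rw [Kern_of_le h, Kern_of_ge h, mul_zero, add_zero, key]
  · rw [Kern_of_le h, Kern_of_ge h, mul_zero, zero_add, key]
    congr 1; ring

lemma Sset_measurable {α : Type*} [MeasurableSpace α] {f g : α → ℝ}
    (hf : Measurable f) (hg : Measurable g) :
    MeasurableSet {q : α × ℝ × ℝ | g q.1 ≤ q.2.1 ∧ q.2.1 < q.2.2 ∧ q.2.2 ≤ f q.1} := by
  apply (measurableSet_le (hg.comp measurable_fst) (measurable_fst.comp measurable_snd)).inter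
  exact (measurableSet_lt (measurable_fst.comp measurable_snd)
      (measurable_snd.comp measurable_snd)).inter
    (measurableSet_le (measurable_snd.comp measurable_snd) (hf.comp measurable_fst))

lemma lintegral_sq_eq {α : Type*} [MeasurableSpace α] (ν : Measure α) [SFinite ν]
    (f g : α → ℝ) (hf : Measurable f) (hg : Measurable g) :
    ∫⁻ a, ENNReal.ofReal ((f a - g a) ^ 2) ∂ν
      = 2 * (ν.prod (volume.prod volume))
          {q : α × ℝ × ℝ | g q.1 ≤ q.2.1 ∧ q.2.1 < q.2.2 ∧ q.2.2 ≤ f q.1}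
        + 2 * (ν.prod (volume.prod volume))
          {q : α × ℝ × ℝ | f q.1 ≤ q.2.1 ∧ q.2.1 < q.2.2 ∧ q.2.2 ≤ g q.1} := by
  have hm1 : Measurable fun a => (volume.prod volume) (Prod.mk a ⁻¹'
      {q : α × ℝ × ℝ | g q.1 ≤ q.2.1 ∧ q.2.1 < q.2.2 ∧ q.2.2 ≤ f q.1}) :=
    measurable_measure_prodMk_left (Sset_measurable hf hg)
  have hm2 : Measurable fun a => (volume.prod volume) (Prod.mk a ⁻¹'
      {q : α × ℝ × ℝ | f q.1 ≤ q.2.1 ∧ q.2.1 < q.2.2 ∧ q.2.2 ≤ g q.1}) :=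
    measurable_measure_prodMk_left (Sset_measurable hg hf)
  rw [Measure.prod_apply (Sset_measurable hf hg), Measure.prod_apply (Sset_measurable hg hf),
    ← lintegral_const_mul 2 hm1, ← lintegral_const_mul 2 hm2,
    ← lintegral_add_left (hm1.const_mul 2)]
  exact lintegral_congr fun a => (two_Kern (f a) (g a)).symm

lemma comparison {α Ω : Type*} [MeasurableSpace α] [MeasurableSpace Ω]
    (ν : Measure α) (μ : Measure Ω) [SigmaFinite ν] [SigmaFinite μ]
    (f g : α → ℝ) (X Y : Ω → ℝ)
    (hf : Measurable f) (hg : Measurable g) (hX : Measurable X) (hY : Measurable Y)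
    (h1 : ∀ s t : ℝ, ν {a | g a ≤ s ∧ s < t ∧ t ≤ f a} ≤ μ {ω | Y ω ≤ s ∧ s < t ∧ t ≤ X ω})
    (h2 : ∀ s t : ℝ, ν {a | f a ≤ s ∧ s < t ∧ t ≤ g a} ≤ μ {ω | X ω ≤ s ∧ s < t ∧ t ≤ Y ω}) :
    ∫⁻ a, ENNReal.ofReal ((f a - g a) ^ 2) ∂ν
      ≤ ∫⁻ ω, ENNReal.ofReal ((X ω - Y ω) ^ 2) ∂μ := by
  rw [lintegral_sq_eq ν f g hf hg, lintegral_sq_eq μ X Y hX hY]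
  have e1 : (ν.prod (volume.prod volume))
        {q : α × ℝ × ℝ | g q.1 ≤ q.2.1 ∧ q.2.1 < q.2.2 ∧ q.2.2 ≤ f q.1}
      ≤ (μ.prod (volume.prod volume))
        {q : Ω × ℝ × ℝ | Y q.1 ≤ q.2.1 ∧ q.2.1 < q.2.2 ∧ q.2.2 ≤ X q.1} := by
    rw [Measure.prod_apply_symm (Sset_measurable hf hg),
      Measure.prod_apply_symm (Sset_measurable hX hY)]
    exact lintegral_mono fun q => h1 q.1 q.2
  have e2 : (ν.prod (volume.prod volume))
        {q : α × ℝ × ℝ | f q.1 ≤ q.2.1 ∧ q.2.1 < q.2.2 ∧ q.2.2 ≤ g q.1}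
      ≤ (μ.prod (volume.prod volume))
        {q : Ω × ℝ × ℝ | X q.1 ≤ q.2.1 ∧ q.2.1 < q.2.2 ∧ q.2.2 ≤ Y q.1} := by
    rw [Measure.prod_apply_symm (Sset_measurable hg hf),
      Measure.prod_apply_symm (Sset_measurable hY hX)]
    exact lintegral_mono fun q => h2 q.1 q.2
  exact add_le_add (mul_le_mul_right e1 2) (mul_le_mul_right e2 2)


lemma slice_bound
    (F G Finv Ginv : ℝ → ℝ)
    (hGmono : Monotone G) (hGrc : ∀ y, ContinuousWithinAt G (Set.Ici y) y)
    (hFbot : Tendsto F atBot (nhds 0)) (hGbot : Tendsto G atBot (nhds 0))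
    (hGtop : Tendsto G atTop (nhds 1))
    (hFinv : ∀ p, Finv p = sInf {y : ℝ | p ≤ F y})
    (hGinv : ∀ p, Ginv p = sInf {y : ℝ | p ≤ G y})
    {Ω : Type*} [MeasurableSpace Ω] (μ : Measure Ω) [IsProbabilityMeasure μ]
    (X Y : Ω → ℝ)
    (hXF : ∀ y, (μ {ω | X ω ≤ y}).toReal = F y)
    (hYG : ∀ y, (μ {ω | Y ω ≤ y}).toReal = G y)
    (s t : ℝ) :
    volume ({p | Ginv p ≤ s ∧ s < t ∧ t ≤ Finv p} ∩ Set.Ioo 0 1)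
      ≤ μ {ω | Y ω ≤ s ∧ s < t ∧ t ≤ X ω} := by
  by_cases hst : s < t
  · have hF0 : ∀ y, 0 ≤ F y := fun y => (hXF y) ▸ ENNReal.toReal_nonneg
    have hμX : ∀ y, μ {ω | X ω ≤ y} = ENNReal.ofReal (F y) := fun y => by
      rw [← hXF y, ENNReal.ofReal_toReal (measure_ne_top μ _)]
    have hμY : ∀ y, μ {ω | Y ω ≤ y} = ENNReal.ofReal (G y) := fun y => by
      rw [← hYG y, ENNReal.ofReal_toReal (measure_ne_top μ _)]
    -- the subset step
    have hsub : ∀ y : ℝ, y < t →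
        {p | Ginv p ≤ s ∧ s < t ∧ t ≤ Finv p} ∩ Set.Ioo 0 1 ⊆ Set.Ioc (F y) (G s) := by
      rintro y hy p ⟨⟨h1, -, h3⟩, hp0, hp1⟩
      constructor
      · -- F y < p
        by_contra hc
        push_neg at hc
        have hbdd : BddBelow {z | p ≤ F z} := by
          obtain ⟨M, hM⟩ := eventually_atBot.1 (hFbot.eventually_lt_const hp0)
          exact ⟨M, fun z hz => le_of_not_gt fun hzM => absurd hz (not_le.2 (hM z hzM.le))⟩
        have : Finv p ≤ y := by rw [hFinv p]; exact csInf_le hbdd hc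
        linarith
      · -- p ≤ G s
        have hne : {z | p ≤ G z}.Nonempty := by
          obtain ⟨z, hz⟩ := (hGtop.eventually_const_lt hp1).exists
          exact ⟨z, hz.le⟩
        have hbdd : BddBelow {z | p ≤ G z} := by
          obtain ⟨M, hM⟩ := eventually_atBot.1 (hGbot.eventually_lt_const hp0)
          exact ⟨M, fun z hz => le_of_not_gt fun hzM => absurd hz (not_le.2 (hM z hzM.le))⟩
        set c := sInf {z | p ≤ G z} with hc
        have hIoi : ∀ w, c < w → p ≤ G w := by
          intro w hw
          obtain ⟨z, hzS, hzw⟩ := exists_lt_of_csInf_lt hne hw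
          exact le_trans hzS (hGmono hzw.le)
        have hpc : p ≤ G c := by
          have tend : Tendsto G (nhdsWithin c (Set.Ioi c)) (nhds (G c)) :=
            (hGrc c).mono_left (nhdsWithin_mono c Set.Ioi_subset_Ici_self)
          exact ge_of_tendsto tend (eventually_nhdsWithin_of_forall fun w hw => hIoi w hw)
        have hcs : c ≤ s := by rw [hGinv p] at h1; exact h1
        exact le_trans hpc (hGmono hcs)
    -- the measure chain
    have key : ∀ n : ℕ, volume ({p | Ginv p ≤ s ∧ s < t ∧ t ≤ Finv p} ∩ Set.Ioo 0 1)
        ≤ ENNReal.ofReal (G s) - ENNReal.ofReal (F (t - 1 / (n + 1))) := by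
      intro n
      have hy : t - 1 / ((n : ℝ) + 1) < t := by
        have : (0:ℝ) < 1 / ((n : ℝ) + 1) := by positivity
        linarith
      calc volume ({p | Ginv p ≤ s ∧ s < t ∧ t ≤ Finv p} ∩ Set.Ioo 0 1)
          ≤ volume (Set.Ioc (F (t - 1 / (n + 1))) (G s)) := measure_mono (hsub _ hy)
        _ = ENNReal.ofReal (G s - F (t - 1 / (n + 1))) := Real.volume_Ioc
        _ = ENNReal.ofReal (G s) - ENNReal.ofReal (F (t - 1 / (n + 1))) :=
            ENNReal.ofReal_sub _ (hF0 _)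
    have hXlt : μ {ω | X ω < t} = ⨆ n : ℕ, μ {ω | X ω ≤ t - 1 / (n + 1)} := by
      have hU : {ω | X ω < t} = ⋃ n : ℕ, {ω | X ω ≤ t - 1 / ((n : ℝ) + 1)} := by
        ext ω
        simp only [Set.mem_setOf_eq, Set.mem_iUnion]
        constructor
        · intro h
          obtain ⟨n, hn⟩ := exists_nat_one_div_lt (by linarith : (0:ℝ) < t - X ω)
          exact ⟨n, by linarith⟩
        · rintro ⟨n, hn⟩
          have : (0:ℝ) < 1 / ((n : ℝ) + 1) := by positivity
          linarith
      rw [hU]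
      refine Directed.measure_iUnion (Monotone.directed_le ?_)
      intro n m hnm
      have h1 : 1 / ((m : ℝ) + 1) ≤ 1 / ((n : ℝ) + 1) :=
        one_div_le_one_div_of_le (by positivity) (by exact_mod_cast add_le_add_left (Nat.cast_le.2 hnm) 1)
      exact fun ω hω => by simp only [Set.mem_setOf_eq] at hω ⊢; linarith
    calc volume ({p | Ginv p ≤ s ∧ s < t ∧ t ≤ Finv p} ∩ Set.Ioo 0 1)
        ≤ ⨅ n : ℕ, (ENNReal.ofReal (G s) - ENNReal.ofReal (F (t - 1 / (n + 1)))) := le_iInf key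
      _ = ENNReal.ofReal (G s) - ⨆ n : ℕ, ENNReal.ofReal (F (t - 1 / (n + 1))) :=
          (ENNReal.sub_iSup ENNReal.ofReal_ne_top).symm
      _ = μ {ω | Y ω ≤ s} - μ {ω | X ω < t} := by
          rw [hμY s, hXlt]
          congr 1
          exact iSup_congr fun n => (hμX _).symm
      _ ≤ μ ({ω | Y ω ≤ s} \ {ω | X ω < t}) := le_measure_diff
      _ = μ {ω | Y ω ≤ s ∧ s < t ∧ t ≤ X ω} := by
          congr 1
          ext ω
          simp only [Set.mem_diff, Set.mem_setOf_eq, not_lt]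
          tauto
  · have : {p | Ginv p ≤ s ∧ s < t ∧ t ≤ Finv p} ∩ Set.Ioo 0 1 = ∅ := by
      ext p; simp only [Set.mem_inter_iff, Set.mem_setOf_eq, Set.mem_empty_iff_false, iff_false]
      rintro ⟨⟨-, h, -⟩, -⟩; exact hst h
    rw [this, measure_empty]
    exact zero_le

end QuantileCouplingAux

open MeasureTheory Filter

/-- The monotone (quantile) coupling minimizes the L² cost: for any coupling
`(X, Y)` of `F` and `G`, `E[(X-Y)²] ≥ ∫_0^1 (F⁻¹(p) - G⁻¹(p))² dp`. -/
theorem quantile_coupling_optimal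
    (F G Finv Ginv : ℝ → ℝ)
    (hFmono : Monotone F) (hFrc : ∀ y, ContinuousWithinAt F (Set.Ici y) y)
    (hFbot : Tendsto F atBot (nhds 0)) (hFtop : Tendsto F atTop (nhds 1))
    (hGmono : Monotone G) (hGrc : ∀ y, ContinuousWithinAt G (Set.Ici y) y)
    (hGbot : Tendsto G atBot (nhds 0)) (hGtop : Tendsto G atTop (nhds 1))
    (hFinv : ∀ p, Finv p = sInf {y : ℝ | p ≤ F y})
    (hGinv : ∀ p, Ginv p = sInf {y : ℝ | p ≤ G y})
    (hFsq : IntegrableOn (fun p => (Finv p) ^ 2) (Set.Ioo 0 1) volume)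
    (hGsq : IntegrableOn (fun p => (Ginv p) ^ 2) (Set.Ioo 0 1) volume)
    {Ω : Type*} [MeasurableSpace Ω] (μ : Measure Ω) [IsProbabilityMeasure μ]
    (X Y : Ω → ℝ) (hX : Measurable X) (hY : Measurable Y)
    (hXF : ∀ y, (μ {ω | X ω ≤ y}).toReal = F y)
    (hYG : ∀ y, (μ {ω | Y ω ≤ y}).toReal = G y) :
    ∫⁻ p in Set.Ioo (0:ℝ) 1, ENNReal.ofReal ((Finv p - Ginv p) ^ 2)
      ≤ ∫⁻ ω, ENNReal.ofReal ((X ω - Y ω) ^ 2) ∂μ := by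
  classical
  set ν := volume.restrict (Set.Ioo (0:ℝ) 1) with hν
  have hFmonoOn : MonotoneOn Finv (Set.Ioo (0:ℝ) 1) := by
    intro p hp q hq hpq
    rw [hFinv p, hFinv q]
    have hbdd : BddBelow {y : ℝ | p ≤ F y} := by
      obtain ⟨M, hM⟩ := eventually_atBot.1 (hFbot.eventually_lt_const hp.1)
      exact ⟨M, fun z hz => le_of_not_gt fun hzM => absurd hz (not_le.2 (hM z hzM.le))⟩
    have hne : {y : ℝ | q ≤ F y}.Nonempty := by
      obtain ⟨z, hz⟩ := (hFtop.eventually_const_lt hq.2).exists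
      exact ⟨z, hz.le⟩
    exact csInf_le_csInf hbdd hne fun y hy => le_trans hpq hy
  have hGmonoOn : MonotoneOn Ginv (Set.Ioo (0:ℝ) 1) := by
    intro p hp q hq hpq
    rw [hGinv p, hGinv q]
    have hbdd : BddBelow {y : ℝ | p ≤ G y} := by
      obtain ⟨M, hM⟩ := eventually_atBot.1 (hGbot.eventually_lt_const hp.1)
      exact ⟨M, fun z hz => le_of_not_gt fun hzM => absurd hz (not_le.2 (hM z hzM.le))⟩
    have hne : {y : ℝ | q ≤ G y}.Nonempty := by
      obtain ⟨z, hz⟩ := (hGtop.eventually_const_lt hq.2).exists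
      exact ⟨z, hz.le⟩
    exact csInf_le_csInf hbdd hne fun y hy => le_trans hpq hy
  have hfa : AEMeasurable Finv ν := aemeasurable_restrict_of_monotoneOn measurableSet_Ioo hFmonoOn
  have hga : AEMeasurable Ginv ν := aemeasurable_restrict_of_monotoneOn measurableSet_Ioo hGmonoOn
  have hLHS : ∫⁻ p in Set.Ioo (0:ℝ) 1, ENNReal.ofReal ((Finv p - Ginv p) ^ 2)
      = ∫⁻ p, ENNReal.ofReal ((hfa.mk Finv p - hga.mk Ginv p) ^ 2) ∂ν := by
    apply lintegral_congr_ae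
    filter_upwards [hfa.ae_eq_mk, hga.ae_eq_mk] with p h1 h2
    rw [h1, h2]
  rw [hLHS]
  refine comparison ν μ (hfa.mk Finv) (hga.mk Ginv) X Y
    hfa.measurable_mk hga.measurable_mk hX hY ?_ ?_
  · intro s t
    have hsets : {a : ℝ | hga.mk Ginv a ≤ s ∧ s < t ∧ t ≤ hfa.mk Finv a}
        =ᵐ[ν] {a : ℝ | Ginv a ≤ s ∧ s < t ∧ t ≤ Finv a} := by
      filter_upwards [hfa.ae_eq_mk, hga.ae_eq_mk] with a h1 h2
      show (hga.mk Ginv a ≤ s ∧ s < t ∧ t ≤ hfa.mk Finv a)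
          = (Ginv a ≤ s ∧ s < t ∧ t ≤ Finv a)
      rw [← h1, ← h2]
    rw [measure_congr hsets, hν, Measure.restrict_apply' measurableSet_Ioo]
    exact slice_bound F G Finv Ginv hGmono hGrc hFbot hGbot hGtop hFinv hGinv μ X Y hXF hYG s t
  · intro s t
    have hsets : {a : ℝ | hfa.mk Finv a ≤ s ∧ s < t ∧ t ≤ hga.mk Ginv a}
        =ᵐ[ν] {a : ℝ | Finv a ≤ s ∧ s < t ∧ t ≤ Ginv a} := by
      filter_upwards [hfa.ae_eq_mk, hga.ae_eq_mk] with a h1 h2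
      show (hfa.mk Finv a ≤ s ∧ s < t ∧ t ≤ hga.mk Ginv a)
          = (Finv a ≤ s ∧ s < t ∧ t ≤ Ginv a)
      rw [← h1, ← h2]
    rw [measure_congr hsets, hν, Measure.restrict_apply' measurableSet_Ioo]
    exact slice_bound G F Ginv Finv hFmono hFrc hGbot hFbot hFtop hGinv hFinv μ Y X hYG hXF s t
end
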